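/- Let t ≥ 4 and let G be a finite graph that excludes K_t as a minor. Then G admits a connected f-flat decomposition of width at most t−2, where f(r) = (t−3)(2r+1). -/

import Mathlib

open SimpleGraph

variable {V : Type} [Fintype V]

/-- The vertex sets `H 0, …, H (ℓ-1)` form a partition of `V`. -/
def IsDecomp {ℓ : ℕ} (H : Fin ℓ → Set V) : Prop :=
  (∀ i, (H i).Nonempty) ∧ (∀ i j, i ≠ j → Disjoint (H i) (H j)) ∧ (∀ v : V, ∃ i, v ∈ H i)

/-- The union of the parts strictly before `i`. -/
def before {ℓ : ℕ} (H : Fin ℓ → Set V) (i : Fin ℓ) : Set V :=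
  {v | ∃ j, j < i ∧ v ∈ H j}

/-- `C` is a (connected) component of `G − U`. -/
def IsCompOf (G : SimpleGraph V) (U C : Set V) : Prop :=
  C.Nonempty ∧ Disjoint C U ∧ (G.induce C).Connected ∧
    ∀ u ∈ C, ∀ v : V, v ∉ U → G.Adj u v → v ∈ C

/-- There is an edge of `G` between `A` and `C`. -/
def LinkedTo (G : SimpleGraph V) (A C : Set V) : Prop :=
  ∃ u ∈ A, ∃ v ∈ C, G.Adj u v

/-- The decomposition has width at most `k`: for every `i` and every component
`C` of `G` minus the parts before `i`, at most `k` of the earlier parts have an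
edge to `C`. -/
def WidthLE (G : SimpleGraph V) {ℓ : ℕ} (H : Fin ℓ → Set V) (k : ℕ) : Prop :=
  ∀ i : Fin ℓ, ∀ C : Set V, IsCompOf G (before H i) C →
    {j : Fin ℓ | j < i ∧ LinkedTo G (H j) C}.ncard ≤ k

/-- The decomposition is `f`-flat: each part `H i` `f`-spreads on the graph
obtained by deleting the earlier parts, i.e. for every `r` and every vertex `v`
outside the earlier parts, at most `f r` vertices of `H i` are reachable from
`v` by a walk of length at most `r` avoiding the earlier parts. -/
def IsFlat (G : SimpleGraph V) {ℓ : ℕ} (H : Fin ℓ → Set V) (f : ℕ → ℕ) : Prop :=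
  ∀ i : Fin ℓ, ∀ r : ℕ, ∀ v : V, v ∉ before H i →
    {u | u ∈ H i ∧ ∃ p : G.Walk v u, p.length ≤ r ∧
      ∀ w ∈ p.support, w ∉ before H i}.ncard ≤ f r

/-- Every part induces a connected subgraph. -/
def IsConnectedDecomp (G : SimpleGraph V) {ℓ : ℕ} (H : Fin ℓ → Set V) : Prop :=
  ∀ i, (G.induce (H i)).Connected

/-- `P` is the vertex set of an isometric path of `G` inside `S`: a path whose
support lies in `S` and which is a shortest among all walks in `S` between its
endpoints. -/
def IsIsomPathIn (G : SimpleGraph V) (S P : Set V) : Prop :=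
  ∃ (x y : V) (p : G.Walk x y), p.IsPath ∧ (∀ w ∈ p.support, w ∈ S) ∧
    P = {w | w ∈ p.support} ∧
    ∀ q : G.Walk x y, (∀ w ∈ q.support, w ∈ S) → p.length ≤ q.length

/-- `G` contains the complete graph `K_t` as a minor: `t` pairwise disjoint
nonempty connected subgraphs, pairwise joined by an edge. -/
def HasKtMinor (G : SimpleGraph V) (t : ℕ) : Prop :=
  ∃ B : Fin t → Set V, (∀ i, (B i).Nonempty) ∧ (∀ i, (G.induce (B i)).Connected) ∧
    (∀ i j, i ≠ j → Disjoint (B i) (B j)) ∧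
    ∀ i j, i ≠ j → ∃ u ∈ B i, ∃ v ∈ B j, G.Adj u v



set_option linter.unusedSectionVars false
attribute [local instance] Classical.propDecidable
set_option maxHeartbeats 1000000

namespace FlatAux
variable {G : SimpleGraph V}

lemma reachable_induce {S : Set V} {x y : V} (p : G.Walk x y)
    (hp : ∀ w ∈ p.support, w ∈ S) (hx : x ∈ S) (hy : y ∈ S) :
    (G.induce S).Reachable ⟨x, hx⟩ ⟨y, hy⟩ := by
  induction p with
  | nil => rfl
  | @cons a b c hab q ih =>
      have hb : b ∈ S := hp b (by simp)
      have hadj : (G.induce S).Adj ⟨a, hx⟩ ⟨b, hb⟩ := hab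
      exact hadj.reachable.trans (ih (fun w hw => hp w (by simp [hw])) hb hy)

lemma induce_connected_of_walks {S : Set V} {x : V} (hx : x ∈ S)
    (h : ∀ y ∈ S, ∃ p : G.Walk x y, ∀ w ∈ p.support, w ∈ S) :
    (G.induce S).Connected := by
  rw [connected_iff]
  refine ⟨fun a b => ?_, ⟨⟨x, hx⟩⟩⟩
  obtain ⟨a, ha⟩ := a
  obtain ⟨b, hb⟩ := b
  obtain ⟨p, hp⟩ := h a ha
  obtain ⟨q, hq⟩ := h b hb
  exact (reachable_induce p hp hx ha).symm.trans (reachable_induce q hq hx hb)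

lemma exists_walk_of_induce {S : Set V} (hconn : (G.induce S).Connected)
    {x y : V} (hx : x ∈ S) (hy : y ∈ S) :
    ∃ p : G.Walk x y, ∀ w ∈ p.support, w ∈ S := by
  obtain ⟨p⟩ := hconn ⟨x, hx⟩ ⟨y, hy⟩
  let f : G.induce S →g G := ⟨fun a => a.1, fun {a b} h => h⟩
  refine ⟨p.map f, ?_⟩
  intro w hw
  rw [Walk.support_map] at hw
  obtain ⟨a, ha, rfl⟩ := List.mem_map.mp hw
  exact a.2

def compOf (G : SimpleGraph V) (U : Set V) (v : V) : Set V :=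
  {u | ∃ p : G.Walk v u, ∀ w ∈ p.support, w ∉ U}

lemma compOf_isCompOf {U : Set V} {v : V} (hv : v ∉ U) : IsCompOf G U (compOf G U v) := by
  have hvmem : v ∈ compOf G U v := ⟨Walk.nil, by simp [hv]⟩
  have hdisj : Disjoint (compOf G U v) U := by
    rw [Set.disjoint_left]
    rintro u ⟨p, hp⟩
    exact hp u p.end_mem_support
  refine ⟨⟨v, hvmem⟩, hdisj, ?_, ?_⟩
  · refine induce_connected_of_walks hvmem (fun y hy => ?_)
    obtain ⟨p, hp⟩ := hy
    exact ⟨p, fun w hw => ⟨p.takeUntil w hw, fun z hz => hp z (p.support_takeUntil_subset hw hz)⟩⟩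
  · rintro u ⟨p, hp⟩ w hw hadj
    refine ⟨p.concat hadj, fun z hz => ?_⟩
    rw [Walk.support_concat, List.mem_append] at hz
    rcases hz with hz | hz
    · exact hp z hz
    · rw [List.mem_singleton] at hz; subst hz; exact hw

lemma mem_of_walk_avoid {U C : Set V} (hC : IsCompOf G U C) {x y : V} (hx : x ∈ C)
    (p : G.Walk x y) (hp : ∀ w ∈ p.support, w ∉ U) : y ∈ C := by
  induction p with
  | nil => exact hx
  | @cons a b c hab q ih =>
      exact ih (hC.2.2.2 a hx b (hp b (by simp)) hab) (fun w hw => hp w (by simp [hw]))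

lemma comp_subset_of_mem {U C : Set V} (hC : IsCompOf G U C) {D : Set V}
    (hD : IsCompOf G U D) {w : V} (hwC : w ∈ C) (hwD : w ∈ D) : C ⊆ D := by
  intro y hy
  obtain ⟨p, hp⟩ := exists_walk_of_induce hC.2.2.1 hwC hy
  exact mem_of_walk_avoid hD hwD p (fun z hz => (hC.2.1.subset_compl_right (hp z hz) : _))

lemma comp_eq_of_mem {U C D : Set V} (hC : IsCompOf G U C)
    (hD : IsCompOf G U D) {w : V} (hwC : w ∈ C) (hwD : w ∈ D) : C = D :=
  Set.Subset.antisymm (comp_subset_of_mem hC hD hwC hwD) (comp_subset_of_mem hD hC hwD hwC)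

lemma exists_shortest {U : Set V} {x y : V}
    (hex : ∃ p : G.Walk x y, ∀ w ∈ p.support, w ∉ U) :
    ∃ p : G.Walk x y, (∀ w ∈ p.support, w ∉ U) ∧
      ∀ q : G.Walk x y, (∀ w ∈ q.support, w ∉ U) → p.length ≤ q.length := by
  have hP : ∃ n, ∃ p : G.Walk x y, p.length = n ∧ ∀ w ∈ p.support, w ∉ U := by
    obtain ⟨p, hp⟩ := hex; exact ⟨p.length, p, rfl, hp⟩
  obtain ⟨p, hlen, hav⟩ := Nat.find_spec hP
  exact ⟨p, hav, fun q hq => by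
    rw [hlen]; exact Nat.find_min' hP ⟨q, rfl, hq⟩⟩

lemma getVert_append_length {x u y : V} (q1 : G.Walk x u) (q2 : G.Walk u y) :
    (q1.append q2).getVert q1.length = u := by
  rw [Walk.getVert_append]; simp

lemma getVert_pos_eq {x y : V} (p : G.Walk x y) {u : V} (h : u ∈ p.support) :
    p.getVert (p.takeUntil u h).length = u := by
  have h2 := getVert_append_length (p.takeUntil u h) (p.dropUntil u h)
  rwa [p.take_spec h] at h2

/-- The window lemma: on a geodesic (shortest walk avoiding `U`), at most
`2r+1` vertices are within avoided-distance `r` of any vertex `v`. -/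
lemma geodesic_window {U : Set V} {x y : V} (p : G.Walk x y)
    (hav : ∀ w ∈ p.support, w ∉ U)
    (hmin : ∀ q : G.Walk x y, (∀ w ∈ q.support, w ∉ U) → p.length ≤ q.length)
    (v : V) (r : ℕ) :
    {u | u ∈ p.support ∧ ∃ q : G.Walk v u, q.length ≤ r ∧ ∀ w ∈ q.support, w ∉ U}.ncard
      ≤ 2 * r + 1 := by
  set R := {u | u ∈ p.support ∧ ∃ q : G.Walk v u, q.length ≤ r ∧ ∀ w ∈ q.support, w ∉ U} with hR
  rcases R.eq_empty_or_nonempty with h | ⟨u₀, hu₀⟩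
  · simp [h]
  set pos : V → ℕ := fun u => if h : u ∈ p.support then (p.takeUntil u h).length else 0 with hpos
  have hposs : ∀ u (h : u ∈ p.support), pos u = (p.takeUntil u h).length := by
    intro u h; simp [hpos, h]
  have hinj : Set.InjOn pos R := by
    intro a ha b hb hab
    have := getVert_pos_eq p ha.1
    rw [← hposs a ha.1, hab, hposs b hb.1, getVert_pos_eq p hb.1] at this
    exact this.symm
  -- pairwise window bound
  have hwin : ∀ a ∈ R, ∀ b ∈ R, pos b ≤ pos a + 2 * r := by
    rintro a ⟨haS, qa, hqa, hqaav⟩ b ⟨hbS, qb, hqb, hqbav⟩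
    set q : G.Walk x y :=
      (p.takeUntil a haS).append ((qa.reverse.append qb).append (p.dropUntil b hbS)) with hq
    have hqav : ∀ w ∈ q.support, w ∉ U := by
      intro w hw
      rw [hq, Walk.mem_support_append_iff] at hw
      rcases hw with hw | hw
      · exact hav w (p.support_takeUntil_subset haS hw)
      · rw [Walk.mem_support_append_iff] at hw
        rcases hw with hw | hw
        · rw [Walk.mem_support_append_iff] at hw
          rcases hw with hw | hw
          · rw [Walk.support_reverse, List.mem_reverse] at hw
            exact hqaav w hw
          · exact hqbav w hw
        · exact hav w (p.support_dropUntil_subset hbS hw)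
    have hlen := hmin q hqav
    have hq_len : q.length = (p.takeUntil a haS).length + (qa.length + qb.length
        + (p.dropUntil b hbS).length) := by
      simp only [hq, Walk.length_append, Walk.length_reverse]
    have hp_len : p.length = (p.takeUntil b hbS).length + (p.dropUntil b hbS).length := by
      conv_lhs => rw [← p.take_spec hbS]
      rw [Walk.length_append]
    rw [hposs a haS, hposs b hbS]
    omega
  -- all positions lie in a window of size 2r+1
  have hfR : R.Finite := Set.toFinite R
  obtain ⟨m, hmmem, hmmin⟩ : ∃ m ∈ pos '' R, ∀ n ∈ pos '' R, m ≤ n := by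
    have : (pos '' R).Nonempty := ⟨pos u₀, Set.mem_image_of_mem _ hu₀⟩
    exact ⟨sInf (pos '' R), Nat.sInf_mem this, fun n hn => Nat.sInf_le hn⟩
  obtain ⟨a₀, ha₀, hpa₀⟩ := hmmem
  have hsub : pos '' R ⊆ Set.Icc m (m + 2 * r) := by
    rintro _ ⟨b, hb, rfl⟩
    exact ⟨hmmin _ (Set.mem_image_of_mem _ hb), hpa₀ ▸ hwin a₀ ha₀ b hb⟩
  calc R.ncard = (pos '' R).ncard := (Set.ncard_image_of_injOn hinj).symm
    _ ≤ (Set.Icc m (m + 2 * r)).ncard := Set.ncard_le_ncard hsub (Set.finite_Icc _ _)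
    _ ≤ 2 * r + 1 := by
        rw [← Finset.coe_Icc, Set.ncard_coe_finset, Nat.card_Icc]; omega

lemma linked_symm {A B : Set V} (h : LinkedTo G A B) : LinkedTo G B A := by
  obtain ⟨u, hu, v, hv, h⟩ := h; exact ⟨v, hv, u, hu, h.symm⟩

lemma linked_mono {A A' B B' : Set V} (hA : A ⊆ A') (hB : B ⊆ B')
    (h : LinkedTo G A B) : LinkedTo G A' B' := by
  obtain ⟨u, hu, v, hv, h⟩ := h; exact ⟨u, hA hu, v, hB hv, h⟩

def UU (L : List (Set V)) : Set V := {v | ∃ B ∈ L, v ∈ B}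

lemma subset_UU {L : List (Set V)} {B : Set V} (h : B ∈ L) : B ⊆ UU L :=
  fun v hv => ⟨B, h, hv⟩

lemma UU_append (L : List (Set V)) (H : Set V) : UU (L ++ [H]) = UU L ∪ H := by
  ext v
  constructor
  · rintro ⟨B, hB, hv⟩
    rcases List.mem_append.mp hB with h | h
    · exact Or.inl ⟨B, h, hv⟩
    · rw [List.mem_singleton] at h; subst h; exact Or.inr hv
  · rintro (⟨B, hB, hv⟩ | hv)
    · exact ⟨B, List.mem_append_left _ hB, hv⟩
    · exact ⟨H, List.mem_append_right _ (by simp), hv⟩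

def Inv (G : SimpleGraph V) (L : List (Set V)) : Prop :=
  ∀ C : Set V, IsCompOf G (UU L) C → ∃ M : Set V → Set V,
    (∀ B ∈ L, LinkedTo G B C → B ⊆ M B ∧ M B ⊆ UU L ∧ (G.induce (M B)).Connected) ∧
    (∀ B ∈ L, ∀ B' ∈ L, LinkedTo G B C → LinkedTo G B' C → B ≠ B' →
      Disjoint (M B) (M B') ∧ LinkedTo G (M B) (M B'))

def FlatSet (G : SimpleGraph V) (t : ℕ) (U B : Set V) : Prop :=
  ∀ r : ℕ, ∀ v : V, v ∉ U →
    {u | u ∈ B ∧ ∃ p : G.Walk v u, p.length ≤ r ∧ ∀ w ∈ p.support, w ∉ U}.ncard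
      ≤ (t - 3) * (2 * r + 1)

structure Good (G : SimpleGraph V) (t : ℕ) (L : List (Set V)) : Prop where
  nonempty : ∀ B ∈ L, B.Nonempty
  disj : L.Pairwise Disjoint
  conn : ∀ B ∈ L, (G.induce B).Connected
  flat : ∀ (i : ℕ) (h : i < L.length), FlatSet G t (UU (L.take i)) L[i]
  inv : ∀ i : ℕ, Inv G (L.take i)

lemma conn_congr {A B : Set V} (e : A = B) (h : (G.induce B).Connected) :
    (G.induce A).Connected := by cases e; exact h

lemma linked_ncard_le {t : ℕ} (ht : 4 ≤ t) (hG : ¬ HasKtMinor G t) {L : List (Set V)}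
    (hne : ∀ B ∈ L, B.Nonempty) (hinv : Inv G L) {C : Set V} (hC : IsCompOf G (UU L) C) :
    {B | B ∈ L ∧ LinkedTo G B C}.ncard ≤ t - 2 := by
  by_contra hlt
  push_neg at hlt
  obtain ⟨s, rfl⟩ : ∃ s, t = s + 1 := ⟨t - 1, by omega⟩
  obtain ⟨T, hTsub, hTcard⟩ := Set.exists_subset_card_eq
    (show s ≤ {B | B ∈ L ∧ LinkedTo G B C}.ncard by omega)
  obtain ⟨M, hM1, hM2⟩ := hinv C hC
  have hTfin : T.Finite := Set.toFinite T
  have hcard : hTfin.toFinset.card = s := by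
    rw [← Set.ncard_eq_toFinset_card _ hTfin]; exact hTcard
  let e := hTfin.toFinset.equivFinOfCardEq hcard
  let part : Fin s → Set V := fun i => (e.symm i : Set V)
  have hpartT : ∀ i, part i ∈ T := fun i => hTfin.mem_toFinset.mp (e.symm i).2
  have hpartL : ∀ i, part i ∈ L := fun i => (hTsub (hpartT i)).1
  have hpartLk : ∀ i, LinkedTo G (part i) C := fun i => (hTsub (hpartT i)).2
  have hpartInj : Function.Injective part := fun i j hij => by
    apply e.symm.injective; exact Subtype.val_injective hij
  have h1 : ∀ i, part i ⊆ M (part i) ∧ M (part i) ⊆ UU L ∧ (G.induce (M (part i))).Connected :=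
    fun i => hM1 _ (hpartL i) (hpartLk i)
  apply hG
  refine ⟨Fin.lastCases C (fun i => M (part i)), ?_, ?_, ?_, ?_⟩
  · intro i
    induction i using Fin.lastCases with
    | last => simp only [Fin.lastCases_last]; exact hC.1
    | cast i =>
        simp only [Fin.lastCases_castSucc]
        exact ((hne _ (hpartL i)).mono (h1 i).1)
  · intro i
    induction i using Fin.lastCases with
    | last => exact conn_congr Fin.lastCases_last hC.2.2.1
    | cast i => exact conn_congr (Fin.lastCases_castSucc i) (h1 i).2.2
  · intro i j hij
    induction i using Fin.lastCases with
    | last =>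
        induction j using Fin.lastCases with
        | last => exact absurd rfl hij
        | cast j =>
            simp only [Fin.lastCases_last, Fin.lastCases_castSucc]
            exact (hC.2.1.mono_right (h1 j).2.1)
    | cast i =>
        induction j using Fin.lastCases with
        | last =>
            simp only [Fin.lastCases_last, Fin.lastCases_castSucc]
            exact (hC.2.1.mono_right (h1 i).2.1).symm
        | cast j =>
            simp only [Fin.lastCases_castSucc]
            refine (hM2 _ (hpartL i) _ (hpartL j) (hpartLk i) (hpartLk j) ?_).1
            exact fun h => hij (by rw [hpartInj h])
  · intro i j hij
    induction i using Fin.lastCases with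
    | last =>
        induction j using Fin.lastCases with
        | last => exact absurd rfl hij
        | cast j =>
            simp only [Fin.lastCases_last, Fin.lastCases_castSucc]
            exact linked_symm (linked_mono (h1 j).1 (le_refl C) (hpartLk j))
    | cast i =>
        induction j using Fin.lastCases with
        | last =>
            simp only [Fin.lastCases_last, Fin.lastCases_castSucc]
            exact linked_mono (h1 i).1 (le_refl C) (hpartLk i)
        | cast j =>
            simp only [Fin.lastCases_castSucc]
            refine (hM2 _ (hpartL i) _ (hpartL j) (hpartLk i) (hpartLk j) ?_).2
            exact fun h => hij (by rw [hpartInj h])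
lemma notin_UU_of_comp {L : List (Set V)} {C' : Set V} {H : Set V}
    (hC' : IsCompOf G (UU (L ++ [H])) C') {w : V} (hw : w ∈ C') : w ∉ UU L := by
  have h := Set.disjoint_left.mp hC'.2.1 hw
  rw [UU_append] at h
  exact fun hh => h (Or.inl hh)

lemma good_append {t : ℕ} {L : List (Set V)} (hL : Good G t L) {C : Set V}
    (hC : IsCompOf G (UU L) C) {H : Set V} (hHC : H ⊆ C) (hHne : H.Nonempty)
    (hconn : (G.induce H).Connected) (hflat : FlatSet G t (UU L) H)
    (M : Set V → Set V)
    (hM1 : ∀ B ∈ L, LinkedTo G B C → B ⊆ M B ∧ M B ⊆ UU L ∧ (G.induce (M B)).Connected)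
    (hM2 : ∀ B ∈ L, ∀ B' ∈ L, LinkedTo G B C → LinkedTo G B' C → B ≠ B' →
      Disjoint (M B) (M B') ∧ LinkedTo G (M B) (M B'))
    (hHM : ∀ B ∈ L, LinkedTo G B C → LinkedTo G (M B) H) :
    Good G t (L ++ [H]) := by
  have hHU : Disjoint H (UU L) := Set.disjoint_of_subset_left hHC hC.2.1
  have hHnotinL : ∀ B ∈ L, B ≠ H := by
    intro B hB hEq
    obtain ⟨x, hx⟩ := hHne
    exact Set.disjoint_left.mp hHU hx (subset_UU hB (hEq ▸ hx))
  have hUU' : UU (L ++ [H]) = UU L ∪ H := UU_append L H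
  constructor
  · intro B hB
    rcases List.mem_append.mp hB with h | h
    · exact hL.nonempty B h
    · rw [List.mem_singleton] at h; subst h; exact hHne
  · rw [List.pairwise_append]
    refine ⟨hL.disj, List.pairwise_singleton _ _, fun B hB B' hB' => ?_⟩
    rw [List.mem_singleton] at hB'; subst hB'
    exact Set.disjoint_of_subset_left (subset_UU hB) hHU.symm
  · intro B hB
    rcases List.mem_append.mp hB with h | h
    · exact hL.conn B h
    · rw [List.mem_singleton] at h; subst h; exact hconn
  · intro i hlen
    by_cases hi : i < L.length
    · have h1 : (L ++ [H])[i] = L[i] := List.getElem_append_left hi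
      have h2 : (L ++ [H]).take i = L.take i :=
        List.take_append_of_le_length (le_of_lt hi)
      rw [h1, h2]
      exact hL.flat i hi
    · have hieq : i = L.length := by
        rw [List.length_append, List.length_singleton] at hlen; omega
      subst hieq
      have h1 : (L ++ [H])[L.length] = H := by simp
      have h2 : (L ++ [H]).take L.length = L := List.take_left
      rw [h1, h2]
      exact hflat
  · intro i
    by_cases hi : i ≤ L.length
    · rw [List.take_append_of_le_length hi]; exact hL.inv i
    · rw [List.take_of_length_le (by rw [List.length_append, List.length_singleton]; omega)]
      intro C' hC'
      obtain ⟨v', hv'⟩ := hC'.1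
      have hwUU : ∀ w ∈ C', w ∉ UU L := fun w hw => notin_UU_of_comp hC' hw
      have hv'U : v' ∉ UU L := hwUU v' hv'
      have hDcomp : IsCompOf G (UU L) (compOf G (UU L) v') := compOf_isCompOf hv'U
      have hv'D : v' ∈ compOf G (UU L) v' := ⟨Walk.nil, by simp [hv'U]⟩
      have hC'D : C' ⊆ compOf G (UU L) v' := by
        intro y hy
        obtain ⟨p, hp⟩ := exists_walk_of_induce hC'.2.2.1 hv' hy
        exact ⟨p, fun w hw => hwUU w (hp w hw)⟩
      by_cases hvC : v' ∈ C
      · -- C' lies inside C; use the supplied models, sending H to itself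
        have hC'C : C' ⊆ C :=
          (comp_eq_of_mem hDcomp hC hv'D hvC) ▸ hC'D
        refine ⟨fun B => if B = H then H else M B, ?_, ?_⟩
        · intro B hB hBlk
          beta_reduce
          rcases List.mem_append.mp hB with h | h
          · rw [if_neg (hHnotinL B h)]
            have hBC : LinkedTo G B C := linked_mono (subset_refl _) hC'C hBlk
            obtain ⟨h1, h2, h3⟩ := hM1 B h hBC
            exact ⟨h1, h2.trans (hUU' ▸ Set.subset_union_left), h3⟩
          · rw [List.mem_singleton] at h; subst h
            rw [if_pos rfl]
            exact ⟨subset_refl _, hUU' ▸ Set.subset_union_right, hconn⟩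
        · intro B hB B' hB' hBlk hB'lk hne'
          beta_reduce
          rcases List.mem_append.mp hB with h | h
          · rcases List.mem_append.mp hB' with h' | h'
            · rw [if_neg (hHnotinL B h), if_neg (hHnotinL B' h')]
              exact hM2 B h B' h' (linked_mono (subset_refl _) hC'C hBlk)
                (linked_mono (subset_refl _) hC'C hB'lk) hne'
            · rw [List.mem_singleton] at h'; subst h'
              rw [if_neg (hHnotinL B h), if_pos rfl]
              have hBC : LinkedTo G B C := linked_mono (subset_refl _) hC'C hBlk
              exact ⟨Set.disjoint_of_subset_left (hM1 B h hBC).2.1 hHU.symm,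
                hHM B h hBC⟩
          · rw [List.mem_singleton] at h; subst h
            rcases List.mem_append.mp hB' with h' | h'
            · rw [if_pos rfl, if_neg (hHnotinL B' h')]
              have hB'C : LinkedTo G B' C := linked_mono (subset_refl _) hC'C hB'lk
              exact ⟨(Set.disjoint_of_subset_left (hM1 B' h' hB'C).2.1 hHU.symm).symm,
                linked_symm (hHM B' h' hB'C)⟩
            · rw [List.mem_singleton] at h'; subst h'
              exact absurd rfl hne'
      · -- C' lies in a different component; reuse the invariant for that component
        have hDdisj : Disjoint (compOf G (UU L) v') C := by
          rw [Set.disjoint_left]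
          intro x hxD hxC
          exact hvC ((comp_eq_of_mem hDcomp hC hxD hxC) ▸ hv'D)
        have hHnotlk : ¬ LinkedTo G H C' := by
          rintro ⟨u, huH, w, hwC', hadj⟩
          have hwU : w ∉ UU L := hwUU w hwC'
          have hwC : w ∈ C := hC.2.2.2 u (hHC huH) w hwU hadj
          exact Set.disjoint_left.mp hDdisj (hC'D hwC') hwC
        have hinvL : Inv G L := by
          have h := hL.inv L.length
          rwa [List.take_length] at h
        obtain ⟨M₂, hM₂1, hM₂2⟩ := hinvL (compOf G (UU L) v') hDcomp
        refine ⟨M₂, ?_, ?_⟩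
        · intro B hB hBlk
          rcases List.mem_append.mp hB with h | h
          · obtain ⟨h1, h2, h3⟩ := hM₂1 B h (linked_mono (subset_refl _) hC'D hBlk)
            exact ⟨h1, h2.trans (hUU' ▸ Set.subset_union_left), h3⟩
          · rw [List.mem_singleton] at h; subst h
            exact absurd hBlk hHnotlk
        · intro B hB B' hB' hBlk hB'lk hne'
          beta_reduce
          rcases List.mem_append.mp hB with h | h
          · rcases List.mem_append.mp hB' with h' | h'
            · exact hM₂2 B h B' h' (linked_mono (subset_refl _) hC'D hBlk)
                (linked_mono (subset_refl _) hC'D hB'lk) hne'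
            · rw [List.mem_singleton] at h'; subst h'
              exact absurd hB'lk hHnotlk
          · rw [List.mem_singleton] at h; subst h
            exact absurd hBlk hHnotlk
lemma ncard_biUnion_le {α : Type} (s : Finset α) (f : α → Set V) (n : ℕ)
    (h : ∀ a ∈ s, (f a).ncard ≤ n) : (⋃ a ∈ s, f a).ncard ≤ s.card * n := by
  classical
  induction s using Finset.induction_on with
  | empty => simp
  | @insert a s ha ih =>
      rw [Finset.set_biUnion_insert]
      calc (f a ∪ ⋃ x ∈ s, f x).ncard ≤ (f a).ncard + (⋃ x ∈ s, f x).ncard :=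
            Set.ncard_union_le _ _
        _ ≤ n + s.card * n := by
            exact Nat.add_le_add (h a (Finset.mem_insert_self a s))
              (ih (fun b hb => h b (Finset.mem_insert_of_mem hb)))
        _ = (insert a s).card * n := by
            rw [Finset.card_insert_of_notMem ha]; ring

lemma one_le_bound {t r : ℕ} (ht : 4 ≤ t) : 1 ≤ (t - 3) * (2 * r + 1) :=
  by have := Nat.mul_le_mul (show 1 ≤ t - 3 by omega) (show 1 ≤ 2 * r + 1 by omega)
     simpa using this

lemma step {t : ℕ} (ht : 4 ≤ t) (hG : ¬ HasKtMinor G t) {L : List (Set V)}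
    (hL : Good G t L) {v₀ : V} (hv₀ : v₀ ∉ UU L) :
    ∃ H : Set V, H.Nonempty ∧ Disjoint H (UU L) ∧ Good G t (L ++ [H]) := by
  have hinvL : Inv G L := by have h := hL.inv L.length; rwa [List.take_length] at h
  set U := UU L with hUdef
  set C := compOf G U v₀ with hCdef
  have hC : IsCompOf G U C := compOf_isCompOf hv₀
  have hv₀C : v₀ ∈ C := ⟨Walk.nil, by simp [hv₀]⟩
  obtain ⟨M, hM1, hM2⟩ := hinvL C hC
  set S : Set (Set V) := {B | B ∈ L ∧ LinkedTo G B C} with hSdef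
  have hScard : S.ncard ≤ t - 2 := linked_ncard_le ht hG hL.nonempty hinvL hC
  have hCU : ∀ w ∈ C, w ∉ U := fun w hw => Set.disjoint_left.mp hC.2.1 hw
  rcases S.eq_empty_or_nonempty with hSe | ⟨B₁, hB₁L, hB₁lk⟩
  · -- no linked parts: take a single vertex
    refine ⟨{v₀}, ⟨v₀, rfl⟩, by simpa [Set.disjoint_left] using hv₀, ?_⟩
    refine good_append hL hC (by simpa using hv₀C) ⟨v₀, rfl⟩ ?_ ?_ M hM1 hM2 ?_
    · exact induce_connected_of_walks (x := v₀) rfl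
        (fun y hy => by rw [Set.mem_singleton_iff] at hy; subst hy
                        exact ⟨Walk.nil, by simp⟩)
    · intro r v hv
      have hsub : {u | u ∈ ({v₀} : Set V) ∧ ∃ p : G.Walk v u, p.length ≤ r ∧
          ∀ w ∈ p.support, w ∉ U} ⊆ {v₀} := fun u hu => hu.1
      calc _ ≤ ({v₀} : Set V).ncard := Set.ncard_le_ncard hsub (Set.toFinite _)
        _ = 1 := Set.ncard_singleton v₀
        _ ≤ (t - 3) * (2 * r + 1) := one_le_bound ht
    · intro B hB hBlk
      exact absurd (show B ∈ S from ⟨hB, hBlk⟩) (by rw [hSe]; exact Set.notMem_empty B)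
  · -- main case
    obtain ⟨u₁, hu₁, hub, hhubC, hadj₁⟩ := hB₁lk
    set S' : Set (Set V) := S \ {B₁} with hS'def
    have key : ∀ B ∈ S', ∃ (c : V) (p : G.Walk hub c),
        (∀ w ∈ p.support, w ∉ U) ∧
        (∀ q : G.Walk hub c, (∀ w ∈ q.support, w ∉ U) → p.length ≤ q.length) ∧
        (∃ b ∈ B, G.Adj b c) ∧ (∀ w ∈ p.support, w ∈ C) := by
      rintro B ⟨⟨hBL, hBlk⟩, -⟩
      obtain ⟨b, hb, cB, hcBC, hadjB⟩ := hBlk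
      obtain ⟨p0, hp0⟩ := exists_walk_of_induce hC.2.2.1 hhubC hcBC
      obtain ⟨p, hpav, hpmin⟩ := exists_shortest ⟨p0, fun w hw => hCU w (hp0 w hw)⟩
      refine ⟨cB, p, hpav, hpmin, ⟨b, hb, hadjB⟩, ?_⟩
      intro w hw
      exact mem_of_walk_avoid hC hhubC (p.takeUntil w hw)
        (fun z hz => hpav z (p.support_takeUntil_subset hw hz))
    choose cf Pf hPav hPmin hPadj hPC using key
    set Q : Set V → Set V :=
      fun B => if h : B ∈ S' then {w | w ∈ (Pf B h).support} else ∅ with hQdef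
    have hS'fin : S'.Finite := Set.toFinite _
    set Sfin : Finset (Set V) := hS'fin.toFinset with hSfin
    set H : Set V := {hub} ∪ ⋃ B ∈ Sfin, Q B with hHdef
    have hmemSfin : ∀ {B : Set V}, B ∈ Sfin ↔ B ∈ S' := fun {B} => hS'fin.mem_toFinset
    have hQsubH : ∀ B ∈ Sfin, Q B ⊆ H := by
      intro B hB
      exact (Set.subset_biUnion_of_mem hB).trans Set.subset_union_right
    have hhubH : hub ∈ H := Or.inl rfl
    have hHC : H ⊆ C := by
      rintro w (hw | hw)
      · rw [Set.mem_singleton_iff] at hw; subst hw; exact hhubC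
      · obtain ⟨B, hB, hw⟩ := Set.mem_iUnion₂.mp hw
        have hBS' : B ∈ S' := hmemSfin.mp hB
        rw [hQdef] at hw; simp only [dif_pos hBS'] at hw
        exact hPC B hBS' w hw
    refine ⟨H, ⟨hub, hhubH⟩, Set.disjoint_left.mpr (fun w hw => hCU w (hHC hw)), ?_⟩
    have hconnH : (G.induce H).Connected := by
      refine induce_connected_of_walks hhubH (fun y hy => ?_)
      rcases hy with hy | hy
      · rw [Set.mem_singleton_iff] at hy; subst hy
        exact ⟨Walk.nil, by simpa using hhubH⟩
      · obtain ⟨B, hB, hy⟩ := Set.mem_iUnion₂.mp hy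
        have hBS' : B ∈ S' := hmemSfin.mp hB
        rw [hQdef] at hy; simp only [dif_pos hBS'] at hy
        refine ⟨(Pf B hBS').takeUntil y hy, fun z hz => ?_⟩
        have : z ∈ Q B := by
          rw [hQdef]; simp only [dif_pos hBS']
          exact (Pf B hBS').support_takeUntil_subset hy hz
        exact hQsubH B hB this
    have hflatH : FlatSet G t U H := by
      intro r v hv
      set R := {u | u ∈ H ∧ ∃ p : G.Walk v u, p.length ≤ r ∧ ∀ w ∈ p.support, w ∉ U}
        with hRdef
      rcases S'.eq_empty_or_nonempty with hS'e | ⟨B₂, hB₂⟩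
      · have hRsub : R ⊆ {hub} := by
          rintro u ⟨hu, -⟩
          rcases hu with hu | hu
          · exact hu
          · obtain ⟨B, hB, hu⟩ := Set.mem_iUnion₂.mp hu
            exact absurd (hmemSfin.mp hB) (by rw [hS'e]; exact Set.notMem_empty B)
        calc R.ncard ≤ ({hub} : Set V).ncard := Set.ncard_le_ncard hRsub (Set.toFinite _)
          _ = 1 := Set.ncard_singleton hub
          _ ≤ (t - 3) * (2 * r + 1) := one_le_bound ht
      · have hRsub : R ⊆ ⋃ B ∈ Sfin,
            {u | u ∈ Q B ∧ ∃ p : G.Walk v u, p.length ≤ r ∧ ∀ w ∈ p.support, w ∉ U} := by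
          rintro u ⟨hu, hreach⟩
          rcases hu with hu | hu
          · rw [Set.mem_singleton_iff] at hu; subst hu
            refine Set.mem_biUnion (hmemSfin.mpr hB₂) ⟨?_, hreach⟩
            rw [hQdef]; simp only [dif_pos hB₂]
            exact (Pf _ hB₂).start_mem_support
          · obtain ⟨B, hB, hu⟩ := Set.mem_iUnion₂.mp hu
            exact Set.mem_biUnion hB ⟨hu, hreach⟩
        have hcardB : ∀ B ∈ Sfin,
            ({u | u ∈ Q B ∧ ∃ p : G.Walk v u, p.length ≤ r ∧
              ∀ w ∈ p.support, w ∉ U}).ncard ≤ 2 * r + 1 := by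
          intro B hB
          have hBS' : B ∈ S' := hmemSfin.mp hB
          have : {u | u ∈ Q B ∧ ∃ p : G.Walk v u, p.length ≤ r ∧
              ∀ w ∈ p.support, w ∉ U} =
              {u | u ∈ (Pf B hBS').support ∧ ∃ p : G.Walk v u, p.length ≤ r ∧
              ∀ w ∈ p.support, w ∉ U} := by
            rw [hQdef]; simp only [dif_pos hBS']; rfl
          rw [this]
          exact geodesic_window (Pf B hBS') (hPav B hBS') (hPmin B hBS') v r
        have hcardS : Sfin.card ≤ t - 3 := by
          have h1 : S'.ncard = S.ncard - 1 := Set.ncard_diff_singleton_of_mem ⟨hB₁L, by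
            obtain ⟨b, hb, c, hc, ha⟩ := (⟨u₁, hu₁, hub, hhubC, hadj₁⟩ :
              LinkedTo G B₁ C); exact ⟨b, hb, c, hc, ha⟩⟩
          have h2 : Sfin.card = S'.ncard := (Set.ncard_eq_toFinset_card _ hS'fin).symm
          have h3 : 1 ≤ S.ncard := by
            rw [Nat.one_le_iff_ne_zero, Ne, Set.ncard_eq_zero (Set.toFinite _)]
            intro h
            exact absurd (show B₁ ∈ S from ⟨hB₁L, ⟨u₁, hu₁, hub, hhubC, hadj₁⟩⟩)
              (by rw [h]; exact Set.notMem_empty _)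
          omega
        calc R.ncard ≤ _ := Set.ncard_le_ncard hRsub (Set.toFinite _)
          _ ≤ Sfin.card * (2 * r + 1) := ncard_biUnion_le Sfin _ _ hcardB
          _ ≤ (t - 3) * (2 * r + 1) := Nat.mul_le_mul_right _ hcardS
    refine good_append hL hC hHC ⟨hub, hhubH⟩ hconnH hflatH M hM1 hM2 ?_
    intro B hBL hBlk
    by_cases hBB₁ : B = B₁
    · subst hBB₁
      exact ⟨u₁, (hM1 B hBL hBlk).1 hu₁, hub, hhubH, hadj₁⟩
    · have hBS' : B ∈ S' := ⟨⟨hBL, hBlk⟩, by simpa using hBB₁⟩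
      obtain ⟨b, hb, hadjb⟩ := hPadj B hBS'
      refine ⟨b, (hM1 B hBL hBlk).1 hb, cf B hBS', ?_, hadjb⟩
      apply hQsubH B (hmemSfin.mpr hBS')
      rw [hQdef]; simp only [dif_pos hBS']
      exact (Pf B hBS').end_mem_support
lemma good_nil {t : ℕ} : Good G t ([] : List (Set V)) := by
  refine ⟨by simp, List.Pairwise.nil, by simp, by simp, ?_⟩
  intro i C hC
  refine ⟨fun _ => ∅, ?_, ?_⟩
  · intro B hB; rw [List.take_nil] at hB; exact absurd hB List.not_mem_nil
  · intro B hB; rw [List.take_nil] at hB; exact absurd hB List.not_mem_nil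

lemma build {t : ℕ} (ht : 4 ≤ t) (hG : ¬ HasKtMinor G t) :
    ∀ (n : ℕ) (L : List (Set V)), Good G t L → (UU L)ᶜ.ncard ≤ n →
      ∃ L' : List (Set V), Good G t L' ∧ UU L' = Set.univ := by
  intro n
  induction n with
  | zero =>
      intro L hL hc
      refine ⟨L, hL, ?_⟩
      have h0 : (UU L)ᶜ.ncard = 0 := Nat.le_zero.mp hc
      have : (UU L)ᶜ = ∅ := (Set.ncard_eq_zero (Set.toFinite _)).mp h0
      rwa [Set.compl_empty_iff] at this
  | succ n ih =>
      intro L hL hc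
      by_cases hU : UU L = Set.univ
      · exact ⟨L, hL, hU⟩
      · obtain ⟨v₀, hv₀⟩ : ((UU L)ᶜ).Nonempty := by
          rw [Set.nonempty_compl]; exact hU
        obtain ⟨H, hne, hdisj, hgood⟩ := step ht hG hL hv₀
        have hss : (UU (L ++ [H]))ᶜ ⊂ (UU L)ᶜ := by
          rw [UU_append]
          apply Set.ssubset_iff_of_subset (Set.compl_subset_compl.mpr
            Set.subset_union_left) |>.mpr
          obtain ⟨x, hx⟩ := hne
          exact ⟨x, Set.disjoint_left.mp hdisj hx, fun hxx => hxx (Or.inr hx)⟩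
        have hlt := Set.ncard_lt_ncard hss (Set.toFinite _)
        exact ih (L ++ [H]) hgood (by omega)

end FlatAux

open FlatAux in
theorem exists_connected_flat_decomp (t : ℕ) (ht : 4 ≤ t)
    (G : SimpleGraph V) (hG : ¬ HasKtMinor G t) :
    ∃ (ℓ : ℕ) (H : Fin ℓ → Set V), IsDecomp H ∧ IsConnectedDecomp G H ∧
      IsFlat G H (fun r => (t - 3) * (2 * r + 1)) ∧ WidthLE G H (t - 2) := by
  classical
  obtain ⟨L, hL, hUU⟩ := build ht hG ((UU ([] : List (Set V)))ᶜ.ncard) [] good_nil le_rfl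
  have hlen : ∀ (j : Fin L.length), L[(j : ℕ)] ∈ L := fun j => List.getElem_mem j.isLt
  have hdisjij : ∀ (i j : Fin L.length), i ≠ j → Disjoint (L[(i : ℕ)]) (L[(j : ℕ)]) := by
    intro i j hij
    rcases lt_or_gt_of_ne (Fin.val_ne_of_ne hij) with h | h
    · exact List.pairwise_iff_getElem.mp hL.disj i j i.isLt j.isLt h
    · exact (List.pairwise_iff_getElem.mp hL.disj j i j.isLt i.isLt h).symm
  have hdistinct : ∀ (i j : Fin L.length), i ≠ j → L[(i : ℕ)] ≠ L[(j : ℕ)] := by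
    intro i j hij heq
    obtain ⟨x, hx⟩ := hL.nonempty _ (hlen i)
    exact Set.disjoint_left.mp (hdisjij i j hij) hx (heq ▸ hx)
  have hmemtake : ∀ (i : Fin L.length) (j : Fin L.length), (j : ℕ) < (i : ℕ) →
      L[(j : ℕ)] ∈ L.take (i : ℕ) := by
    intro i j hj
    have hjlen : (j : ℕ) < (L.take (i : ℕ)).length := by
      rw [List.length_take]; exact lt_min hj j.isLt
    have heq : (L.take (i : ℕ))[(j : ℕ)]'hjlen = L[(j : ℕ)] := List.getElem_take
    rw [← heq]; exact List.getElem_mem hjlen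
  have before_eq : ∀ i : Fin L.length,
      before (fun j : Fin L.length => L[(j : ℕ)]) i = UU (L.take (i : ℕ)) := by
    intro i; ext v
    constructor
    · rintro ⟨j, hj, hv⟩
      exact ⟨L[(j : ℕ)], hmemtake i j hj, hv⟩
    · rintro ⟨B, hB, hv⟩
      obtain ⟨j, hj, hBj⟩ := List.mem_iff_getElem.mp hB
      have hjlen : j < L.length ∧ j < (i : ℕ) := by
        rw [List.length_take] at hj; omega
      have heq : L[j]'hjlen.1 = B := by
        exact List.getElem_take.symm.trans hBj
      exact ⟨⟨j, hjlen.1⟩, hjlen.2, show v ∈ L[j]'hjlen.1 from heq ▸ hv⟩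
  refine ⟨L.length, fun i => L[(i : ℕ)], ⟨fun i => hL.nonempty _ (hlen i),
    hdisjij, fun v => ?_⟩, fun i => hL.conn _ (hlen i), ?_, ?_⟩
  · have hvU : v ∈ UU L := by rw [hUU]; trivial
    obtain ⟨B, hB, hv⟩ := hvU
    obtain ⟨j, hj, hBj⟩ := List.mem_iff_getElem.mp hB
    exact ⟨⟨j, hj⟩, show v ∈ L[j]'hj from hBj ▸ hv⟩
  · intro i r v hv
    have hb := before_eq i
    rw [hb] at hv
    simp only [hb]
    exact hL.flat (i : ℕ) i.isLt r v hv
  · intro i C hC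
    rw [before_eq i] at hC
    have hcount := linked_ncard_le ht hG
      (fun B hB => hL.nonempty B (List.take_subset _ _ hB)) (hL.inv (i : ℕ)) hC
    have hinj : Set.InjOn (fun j : Fin L.length => L[(j : ℕ)])
        {j : Fin L.length | j < i ∧ LinkedTo G (L[(j : ℕ)]) C} := by
      intro a _ b _ hab
      by_contra hne
      exact hdistinct a b hne hab
    have himg : (fun j : Fin L.length => L[(j : ℕ)]) ''
        {j : Fin L.length | j < i ∧ LinkedTo G (L[(j : ℕ)]) C} ⊆
        {B | B ∈ L.take (i : ℕ) ∧ LinkedTo G B C} := by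
      rintro _ ⟨j, ⟨hji, hjlk⟩, rfl⟩
      exact ⟨hmemtake i j hji, hjlk⟩
    calc {j : Fin L.length | j < i ∧ LinkedTo G (L[(j : ℕ)]) C}.ncard
        = _ := (Set.ncard_image_of_injOn hinj).symm
      _ ≤ {B | B ∈ L.take (i : ℕ) ∧ LinkedTo G B C}.ncard :=
          Set.ncard_le_ncard himg (Set.toFinite _)
      _ ≤ t - 2 := hcount
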